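/- Suppose m ≥ 3 and λ_i = 1/m for every i ∈ I. Then R is nonexpansive, i.e. ‖Rx‖ ≤ ‖x‖ for every x ∈ 𝐗; moreover, if X ≠ {0}, the operator norm of R equals 1. -/

import Mathlib

/-- If `m ≥ 3` and `λ i = 1/m` for every `i`, then `R` is nonexpansive;
moreover, if `X ≠ {0}`, then the operator norm of `R` equals `1`. -/
theorem R_nonexpansive_of_equal_weights
    {X : Type*} [NormedAddCommGroup X] [InnerProductSpace ℝ X]
    (m : ℕ) (hm : 3 ≤ m)
    (lam : Fin m → ℝ) (hlam : ∀ i, lam i = 1 / m)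
    (mu : Fin m → ℝ) (hmu : ∀ i, mu i = 1 - lam i)
    (R : PiLp 2 (fun _ : Fin m => X) →L[ℝ] PiLp 2 (fun _ : Fin m => X))
    (hR : ∀ x i, R x i = ∑ j ∈ Finset.univ.erase i, (lam j / mu i) • x j) :
    (∀ x, ‖R x‖ ≤ ‖x‖) ∧ (Nontrivial X → ‖R‖ = 1) := by
  have hmR : (3:ℝ) ≤ (m:ℝ) := by exact_mod_cast hm
  have hm1 : (0:ℝ) < (m:ℝ) - 1 := by linarith
  have hm0 : (0:ℝ) < (m:ℝ) := by linarith
  set c : ℝ := 1 / ((m:ℝ) - 1) with hc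
  have hcpos : 0 < c := by positivity
  have hcoef : ∀ i j : Fin m, lam j / mu i = c := by
    intro i j
    have h1 : (m:ℝ) ≠ 0 := ne_of_gt hm0
    have h2 : (m:ℝ) - 1 ≠ 0 := ne_of_gt hm1
    rw [hlam, hmu, hlam, hc]
    rw [show (1:ℝ) - 1/(m:ℝ) = ((m:ℝ)-1)/(m:ℝ) by field_simp]
    field_simp
  have hRx : ∀ (x : PiLp 2 (fun _ : Fin m => X)) (i : Fin m),
      R x i = c • ((∑ j, x j) - x i) := by
    intro x i
    rw [hR]
    rw [Finset.sum_congr rfl (fun j _ => by rw [hcoef i j])]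
    rw [← Finset.smul_sum, Finset.sum_erase_eq_sub (Finset.mem_univ i)]
  have key : ∀ x : PiLp 2 (fun _ : Fin m => X), ‖R x‖ ≤ ‖x‖ := by
    intro x
    have hx2 : ‖x‖ ^ 2 = ∑ i, ‖x i‖ ^ 2 := PiLp.norm_sq_eq_of_L2 _ x
    have hR2 : ‖R x‖ ^ 2 = ∑ i, ‖R x i‖ ^ 2 := PiLp.norm_sq_eq_of_L2 _ (R x)
    set S := ∑ j, x j with hS
    have hterm : ∀ i, ‖R x i‖ ^ 2
        = c ^ 2 * (‖S‖ ^ 2 - 2 * inner ℝ S (x i) + ‖x i‖ ^ 2) := by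
      intro i
      rw [hRx, norm_smul, mul_pow, Real.norm_eq_abs, sq_abs,
        @norm_sub_sq_real]
    have hsumin : ∑ i, (inner ℝ S (x i) : ℝ) = ‖S‖ ^ 2 := by
      rw [← inner_sum, ← hS, real_inner_self_eq_norm_sq]
    have hRsum : ‖R x‖ ^ 2
        = c ^ 2 * ((m : ℝ) * ‖S‖ ^ 2 - 2 * ‖S‖ ^ 2 + ‖x‖ ^ 2) := by
      rw [hR2, Finset.sum_congr rfl (fun i _ => hterm i), ← Finset.mul_sum]
      congr 1
      rw [Finset.sum_add_distrib, Finset.sum_sub_distrib, ← hx2,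
        Finset.sum_const, ← Finset.mul_sum, hsumin]
      simp [mul_comm]
    have hSx : ‖S‖ ^ 2 ≤ (m : ℝ) * ‖x‖ ^ 2 := by
      have h1 : ‖S‖ ≤ ∑ i, ‖x i‖ := norm_sum_le _ _
      have h2 : (∑ i, ‖x i‖) ^ 2 ≤ (m : ℝ) * ∑ i, ‖x i‖ ^ 2 := by
        have := sq_sum_le_card_mul_sum_sq (s := (Finset.univ : Finset (Fin m)))
          (f := fun i => ‖x i‖)
        simpa using this
      calc ‖S‖ ^ 2 ≤ (∑ i, ‖x i‖) ^ 2 := by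
            apply pow_le_pow_left₀ (norm_nonneg _) h1
        _ ≤ (m : ℝ) * ∑ i, ‖x i‖ ^ 2 := h2
        _ = (m : ℝ) * ‖x‖ ^ 2 := by rw [hx2]
    have hc2 : c ^ 2 * ((m:ℝ) - 1) ^ 2 = 1 := by
      rw [hc]; field_simp
    have hsq : ‖R x‖ ^ 2 ≤ ‖x‖ ^ 2 := by
      calc ‖R x‖ ^ 2 = c ^ 2 * (((m:ℝ) - 2) * ‖S‖ ^ 2 + ‖x‖ ^ 2) := by
            rw [hRsum]; ring
        _ ≤ c ^ 2 * (((m:ℝ) - 2) * ((m:ℝ) * ‖x‖ ^ 2) + ‖x‖ ^ 2) := by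
            apply mul_le_mul_of_nonneg_left _ (sq_nonneg c)
            have h3 : ((m:ℝ) - 2) * ‖S‖ ^ 2 ≤ ((m:ℝ) - 2) * ((m:ℝ) * ‖x‖ ^ 2) :=
              mul_le_mul_of_nonneg_left hSx (by linarith)
            linarith
        _ = (c ^ 2 * ((m:ℝ) - 1) ^ 2) * ‖x‖ ^ 2 := by ring
        _ = ‖x‖ ^ 2 := by rw [hc2, one_mul]
    nlinarith [hsq, norm_nonneg (R x), norm_nonneg x, sq_nonneg (‖R x‖ + ‖x‖)]
  refine ⟨key, fun hX => ?_⟩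
  have : Nontrivial X := hX
  obtain ⟨v, hv⟩ := exists_ne (0 : X)
  set x : PiLp 2 (fun _ : Fin m => X) := WithLp.toLp 2 (fun _ => v) with hxdef
  have hfix : R x = x := by
    ext i
    rw [hRx]
    have hsum : (∑ j : Fin m, x j) = (m : ℝ) • v := by
      simp [hxdef, Finset.sum_const, ← Nat.cast_smul_eq_nsmul ℝ]
    rw [hsum]
    show c • ((m : ℝ) • v - v) = v
    rw [show (m:ℝ) • v - v = ((m:ℝ) - 1) • v by rw [sub_smul, one_smul],
      smul_smul, show c * ((m:ℝ) - 1) = 1 from by rw [hc]; field_simp, one_smul]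
  have hxne : x ≠ 0 := by
    intro h
    apply hv
    have := congrFun (congrArg (fun y : PiLp 2 (fun _ : Fin m => X) => (y : ∀ _ : Fin m, X)) h) ⟨0, by omega⟩
    simpa [hxdef] using this
  have hxpos : 0 < ‖x‖ := norm_pos_iff.mpr hxne
  have hge : 1 ≤ ‖R‖ := by
    have h1 := R.le_opNorm x
    rw [hfix] at h1
    nlinarith
  have hle : ‖R‖ ≤ 1 := R.opNorm_le_bound zero_le_one (fun y => by simpa using key y)
  linarith
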